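/- Let A be an n×n max-plus matrix with λ(A) = 0 and let τ be a cyclic permutation on K ⊆ {1,...,n} whose cycle mean equals 0. Then for every l ∈ {1,...,n} and every i ∈ K: A*_{il} = A*_{iτ(i)} + A*_{τ(i)l} and A*_{li} = A*_{lτ⁻¹(i)} + A*_{τ⁻¹(i)i}. In particular, columns of A* indexed by vertices of the same critical cycle are max-plus proportional to each other. -/

import Mathlib

namespace MaxPlus

/-- Max-plus (tropical) matrix product over `EReal` (`⊥ = -∞` is the max-plus zero,
`+` is the max-plus multiplication, `⊔`/`⨆` is the max-plus addition). -/
noncomputable def mmul {n : ℕ} (A B : Matrix (Fin n) (Fin n) EReal) : Matrix (Fin n) (Fin n) EReal :=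
  fun i j => ⨆ k, A i k + B k j

/-- The max-plus identity matrix. -/
noncomputable def mId (n : ℕ) : Matrix (Fin n) (Fin n) EReal := fun i j => if i = j then 0 else ⊥

/-- Max-plus matrix powers. -/
noncomputable def mpow {n : ℕ} (A : Matrix (Fin n) (Fin n) EReal) : ℕ → Matrix (Fin n) (Fin n) EReal
  | 0 => mId n
  | m + 1 => mmul (mpow A m) A

/-- The max-plus Kleene star `A* = I ⊕ A ⊕ A² ⊕ ⋯` (entrywise supremum of all powers). -/
noncomputable def mstar {n : ℕ} (A : Matrix (Fin n) (Fin n) EReal) : Matrix (Fin n) (Fin n) EReal :=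
  fun i j => ⨆ m, mpow A m i j

/-- Weight of the cycle determined by the list `l = [i₁,…,i_k]`,
namely `A i₁ i₂ + ⋯ + A i_k i₁`. -/
noncomputable def cycleWeight {n : ℕ} (A : Matrix (Fin n) (Fin n) EReal) (l : List (Fin n)) : EReal :=
  ((l.zip (l.rotate 1)).map fun p => A p.1 p.2).sum

/-- A nonempty list of pairwise distinct indices, representing an elementary cycle. -/
def IsCycle {n : ℕ} (l : List (Fin n)) : Prop := l ≠ [] ∧ l.Nodup

/-- All elementary cycles have nonpositive weight, i.e. the maximal cycle mean `λ(A) ≤ 0`. -/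
def CycleBound {n : ℕ} (A : Matrix (Fin n) (Fin n) EReal) : Prop :=
  ∀ l : List (Fin n), IsCycle l → cycleWeight A l ≤ 0

/-- A definite matrix: maximal cycle mean `0` and zero (max-plus unit) diagonal.
(The diagonal entries give cycles of weight `0`, so `λ(A) = 0` is equivalent to
`CycleBound A` here.) -/
def Definite {n : ℕ} (A : Matrix (Fin n) (Fin n) EReal) : Prop :=
  CycleBound A ∧ ∀ i, A i i = 0

/-- Max-plus action of a matrix on a vector: `(A ⊙ x)_i = max_j (A_{ij} + x_j)`. -/
noncomputable def mapVec {n : ℕ} (A : Matrix (Fin n) (Fin n) EReal) (x : Fin n → EReal) :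
    Fin n → EReal :=
  fun i => ⨆ j, A i j + x j

/-- The max-plus eigenspace of `A` for the eigenvalue `0`. -/
def eig {n : ℕ} (A : Matrix (Fin n) (Fin n) EReal) : Set (Fin n → EReal) :=
  {x | mapVec A x = x}

/-- The max-plus column span of a matrix. -/
def mspan {n : ℕ} (A : Matrix (Fin n) (Fin n) EReal) : Set (Fin n → EReal) :=
  {y | ∃ α : Fin n → EReal, y = fun i => ⨆ j, α j + A i j}

/-! ### Helper lemmas -/

lemma iSup_add_iSup_le {ι κ : Sort*} (f : ι → EReal) (g : κ → EReal) {c : EReal}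
    (h : ∀ i j, f i + g j ≤ c) : (⨆ i, f i) + (⨆ j, g j) ≤ c := by
  refine EReal.add_le_of_forall_lt fun a' ha' b' hb' => ?_
  obtain ⟨i, hi⟩ := lt_iSup_iff.mp ha'
  obtain ⟨j, hj⟩ := lt_iSup_iff.mp hb'
  exact le_trans (add_le_add hi.le hj.le) (h i j)

lemma add_iSup_le {ι : Sort*} (a : EReal) (g : ι → EReal) {c : EReal}
    (h : ∀ j, a + g j ≤ c) : a + (⨆ j, g j) ≤ c := by
  have := iSup_add_iSup_le (fun _ : Unit => a) g (fun _ j => h j)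
  simpa using this

variable {n : ℕ}

/-- Weight of the walk `v 0, v 1, …, v m`. -/
noncomputable def wW (A : Matrix (Fin n) (Fin n) EReal) (m : ℕ) (v : ℕ → Fin n) : EReal :=
  ∑ t ∈ Finset.range m, A (v t) (v (t + 1))

noncomputable def pathW (A : Matrix (Fin n) (Fin n) EReal) : Fin n → List (Fin n) → Fin n → EReal
  | a, [], b => A a b
  | a, c :: l, b => A a c + pathW A c l b

lemma zip_sum (A : Matrix (Fin n) (Fin n) EReal) :
    ∀ (l : List (Fin n)) (a b : Fin n),
      (((a :: l).zip (l ++ [b])).map fun p => A p.1 p.2).sum = pathW A a l b := by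
  intro l
  induction l with
  | nil => intro a b; simp [pathW]
  | cons c l ih => intro a b; simp [pathW, ih c b]

lemma cycleWeight_cons (A : Matrix (Fin n) (Fin n) EReal) (a : Fin n) (l : List (Fin n)) :
    cycleWeight A (a :: l) = pathW A a l a := by
  rw [cycleWeight, List.rotate_cons_succ, List.rotate_zero, zip_sum]

lemma pathW_range' (A : Matrix (Fin n) (Fin n) EReal) (v : ℕ → Fin n) :
    ∀ (k s : ℕ) (b : Fin n),
      pathW A (v s) ((List.range' (s + 1) k).map v) b
        = (∑ r ∈ Finset.range k, A (v (s + r)) (v (s + r + 1))) + A (v (s + k)) b := by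
  intro k
  induction k with
  | zero => intro s b; simp [pathW]
  | succ k ih =>
    intro s b
    rw [List.range'_succ, List.map_cons]
    show A (v s) (v (s + 1)) + pathW A (v (s + 1)) ((List.range' (s + 1 + 1) k).map v) b = _
    rw [ih (s + 1) b, Finset.sum_range_succ']
    simp only [Nat.add_zero]
    have e1 : ∀ r, s + 1 + r = s + (r + 1) := fun r => by omega
    simp only [e1]
    abel

lemma cycleWeight_walk (A : Matrix (Fin n) (Fin n) EReal) (v : ℕ → Fin n) (k : ℕ)
    (h : v (k + 1) = v 0) :
    cycleWeight A ((List.range (k + 1)).map v) = wW A (k + 1) v := by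
  rw [List.range_eq_range']
  have h1 : List.range' 0 (k + 1) = 0 :: List.range' (0 + 1) k := List.range'_succ
  rw [h1, List.map_cons, cycleWeight_cons, pathW_range' A v k 0 (v 0)]
  simp only [Nat.zero_add]
  rw [wW, Finset.sum_range_succ, h]


variable {n : ℕ}

lemma closed_walk_nonpos {A : Matrix (Fin n) (Fin n) EReal} (hb : CycleBound A) :
    ∀ m (v : ℕ → Fin n), v m = v 0 → wW A m v ≤ 0 := by
  intro m
  induction m using Nat.strong_induction_on with
  | _ m IH =>
    intro v hv
    match m, hv with
    | 0, _ => simp [wW]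
    | (k+1), hv =>
      set m := k + 1 with hm
      by_cases hdup : ∃ s t, s < t ∧ t ≤ m ∧ (s ≠ 0 ∨ t ≠ m) ∧ v s = v t
      · obtain ⟨s, t, hst, htm, hne, heq⟩ := hdup
        set d := t - s with hd
        have hd1 : 1 ≤ d := by omega
        have hdm : d < m := by omega
        have hsd : s + d = t := by omega
        -- outer walk
        set w : ℕ → Fin n := fun r => if r ≤ s then v r else v (r + d) with hw
        set f : ℕ → EReal := fun r => A (v r) (v (r + 1)) with hf
        have hsplit : wW A m v
            = ((∑ r ∈ Finset.range s, f r) + ∑ r ∈ Finset.Ico s t, f r)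
              + ∑ r ∈ Finset.Ico t m, f r := by
          rw [wW, Finset.range_eq_Ico,
            ← Finset.sum_Ico_consecutive _ (Nat.zero_le t) htm,
            ← Finset.sum_Ico_consecutive _ (Nat.zero_le s) hst.le,
            ← Finset.range_eq_Ico]
        have hinner : wW A d (fun r => v (s + r)) = ∑ r ∈ Finset.Ico s t, f r := by
          rw [wW, Finset.sum_Ico_eq_sum_range, ← hd]
          apply Finset.sum_congr rfl
          intro r _
          simp only [hf]
          congr 2 <;> omega
        have houter : wW A (m - d) w
            = (∑ r ∈ Finset.range s, f r) + ∑ r ∈ Finset.Ico t m, f r := by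
          rw [wW, Finset.range_eq_Ico,
            ← Finset.sum_Ico_consecutive _ (Nat.zero_le s) (by omega : s ≤ m - d),
            ← Finset.range_eq_Ico]
          congr 1
          · apply Finset.sum_congr rfl
            intro r hr
            simp only [Finset.mem_range] at hr
            simp only [hw, hf, if_pos (by omega : r ≤ s), if_pos (by omega : r + 1 ≤ s)]
          · rw [Finset.sum_Ico_eq_sum_range, Finset.sum_Ico_eq_sum_range]
            have hcard : m - d - s = m - t := by omega
            rw [hcard]
            apply Finset.sum_congr rfl
            intro r _
            simp only [hw, hf]
            by_cases hr0 : r = 0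
            · subst hr0
              simp only [Nat.add_zero, if_pos (le_refl s), if_neg (by omega : ¬ s + 1 ≤ s)]
              rw [heq]
              congr 2 <;> omega
            · rw [if_neg (by omega : ¬ s + r ≤ s), if_neg (by omega : ¬ s + r + 1 ≤ s)]
              congr 2 <;> omega
        have hwc : w (m - d) = w 0 := by
          simp only [hw, if_pos (Nat.zero_le s)]
          by_cases hts : t = m
          · rw [if_pos (by omega : m - d ≤ s), show m - d = s by omega, heq, hts, hv]
          · rw [if_neg (by omega : ¬ m - d ≤ s), show m - d + d = m by omega, hv]
        have huc : (fun r => v (s + r)) d = (fun r => v (s + r)) 0 := by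
          show v (s + d) = v (s + 0)
          rw [hsd, Nat.add_zero]
          exact heq.symm
        have h1 := IH (m - d) (by omega) w hwc
        have h2 := IH d (by omega) (fun r => v (s + r)) huc
        rw [hsplit, ← hinner]
        have hre : (∑ r ∈ Finset.range s, f r) + wW A d (fun r => v (s + r))
              + ∑ r ∈ Finset.Ico t m, f r
            = wW A (m - d) w + wW A d (fun r => v (s + r)) := by rw [houter]; abel
        rw [hre]
        exact le_trans (add_le_add h1 h2) (by simp)
      · push_neg at hdup
        have hinj : ∀ x ∈ List.range m, ∀ y ∈ List.range m, v x = v y → x = y := by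
          intro x hx y hy hxy
          simp only [List.mem_range] at hx hy
          by_contra hne
          rcases Nat.lt_or_ge x y with h | h
          · exact hdup x y h (by omega) (Or.inr (by omega)) hxy
          · have h' : y < x := by omega
            exact hdup y x h' (by omega) (Or.inr (by omega)) hxy.symm
        have hcyc : IsCycle ((List.range m).map v) := by
          constructor
          · simp [hm]
          · exact List.nodup_range.map_on hinj
        have := hb _ hcyc
        rwa [hm, cycleWeight_walk A v k (hm ▸ hv)] at this

lemma ereal_trichotomy (x : EReal) : x = ⊥ ∨ (∃ r : ℝ, x = (r : EReal)) ∨ x = ⊤ := by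
  induction x with
  | bot => exact Or.inl rfl
  | coe r => exact Or.inr (Or.inl ⟨r, rfl⟩)
  | top => exact Or.inr (Or.inr rfl)

lemma wW_le_mpow (A : Matrix (Fin n) (Fin n) EReal) :
    ∀ m (v : ℕ → Fin n), wW A m v ≤ mpow A m (v 0) (v m) := by
  intro m
  induction m with
  | zero => intro v; simp [wW, mpow, mId]
  | succ m ih =>
    intro v
    rw [wW, Finset.sum_range_succ, ← wW]
    calc wW A m v + A (v m) (v (m + 1))
        ≤ mpow A m (v 0) (v m) + A (v m) (v (m + 1)) := add_le_add_left (ih v) _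
      _ ≤ ⨆ k, mpow A m (v 0) k + A k (v (m + 1)) :=
          le_iSup (fun k => mpow A m (v 0) k + A k (v (m + 1))) (v m)
      _ = mpow A (m + 1) (v 0) (v (m + 1)) := rfl

lemma mpow_le_of_walks {A : Matrix (Fin n) (Fin n) EReal} (hA : ∀ i j, A i j ≠ ⊤) :
    ∀ m (i j : Fin n) (c : EReal),
      (∀ v : ℕ → Fin n, v 0 = i → v m = j → wW A m v ≤ c) → mpow A m i j ≤ c := by
  intro m
  induction m with
  | zero =>
    intro i j c h
    show mId n i j ≤ c
    rw [mId]
    by_cases hij : i = j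
    · subst hij
      simpa [wW] using h (fun _ => i) rfl rfl
    · simp [hij]
  | succ m ih =>
    intro i j c h
    show (⨆ k, mpow A m i k + A k j) ≤ c
    refine iSup_le fun k => ?_
    rcases ereal_trichotomy (A k j) with hk | ⟨r, hk⟩ | hk
    · rw [hk, EReal.add_bot]; exact bot_le
    · rw [hk]
      rw [← EReal.le_sub_iff_add_le (Or.inl (EReal.coe_ne_bot r)) (Or.inl (EReal.coe_ne_top r))]
      refine ih i k (c - (r : EReal)) fun v h0 hm => ?_
      rw [EReal.le_sub_iff_add_le (Or.inl (EReal.coe_ne_bot r)) (Or.inl (EReal.coe_ne_top r))]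
      set v' : ℕ → Fin n := fun t => if t ≤ m then v t else j with hv'
      have hw' : wW A (m + 1) v' = wW A m v + (r : EReal) := by
        rw [wW, Finset.sum_range_succ, wW]
        congr 1
        · apply Finset.sum_congr rfl
          intro t ht
          simp only [Finset.mem_range] at ht
          simp only [hv', if_pos (by omega : t ≤ m), if_pos (by omega : t + 1 ≤ m)]
        · simp only [hv', if_pos (le_refl m), if_neg (by omega : ¬ m + 1 ≤ m), hm, hk]
      have := h v' (by simp [hv', h0]) (by simp [hv'])
      rwa [hw'] at this
    · exact absurd hk (hA k j)

lemma mpow_add_le (A : Matrix (Fin n) (Fin n) EReal) :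
    ∀ (p m : ℕ) (i j k : Fin n), mpow A m i j + mpow A p j k ≤ mpow A (m + p) i k := by
  intro p
  induction p with
  | zero =>
    intro m i j k
    show mpow A m i j + mId n j k ≤ mpow A m i k
    rw [mId]
    by_cases hjk : j = k
    · subst hjk; simp
    · simp [hjk]
  | succ p ih =>
    intro m i j k
    show mpow A m i j + (⨆ t, mpow A p j t + A t k) ≤ mpow A (m + (p + 1)) i k
    refine add_iSup_le _ _ fun t => ?_
    rw [← add_assoc]
    calc mpow A m i j + mpow A p j t + A t k
        ≤ mpow A (m + p) i t + A t k := add_le_add_left (ih m i j t) _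
      _ ≤ ⨆ u, mpow A (m + p) i u + A u k :=
          le_iSup (fun u => mpow A (m + p) i u + A u k) t
      _ = mpow A (m + p + 1) i k := rfl

lemma mpow_le_mstar (A : Matrix (Fin n) (Fin n) EReal) (m : ℕ) (i j : Fin n) :
    mpow A m i j ≤ mstar A i j := le_iSup (fun m => mpow A m i j) m

lemma mstar_tri (A : Matrix (Fin n) (Fin n) EReal) (i j k : Fin n) :
    mstar A i j + mstar A j k ≤ mstar A i k := by
  refine iSup_add_iSup_le _ _ fun m p => ?_
  exact le_trans (mpow_add_le A p m i j k) (mpow_le_mstar A (m + p) i k)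

lemma mpow_one_eq (A : Matrix (Fin n) (Fin n) EReal) (i j : Fin n) :
    mpow A 1 i j = A i j := by
  show (⨆ k, mId n i k + A k j) = A i j
  apply le_antisymm
  · refine iSup_le fun k => ?_
    rw [mId]
    by_cases hik : i = k
    · subst hik; simp
    · simp [hik]
  · have := le_iSup (fun k => mId n i k + A k j) i
    simpa [mId] using this

lemma le_mstar (A : Matrix (Fin n) (Fin n) EReal) (i j : Fin n) :
    A i j ≤ mstar A i j := by
  rw [← mpow_one_eq A i j]; exact mpow_le_mstar A 1 i j

lemma mstar_diag {A : Matrix (Fin n) (Fin n) EReal} (hA : ∀ i j, A i j ≠ ⊤)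
    (hb : CycleBound A) (i : Fin n) : mstar A i i = 0 := by
  apply le_antisymm
  · refine iSup_le fun m => ?_
    refine mpow_le_of_walks hA m i i 0 fun v h0 hm => ?_
    exact closed_walk_nonpos hb m v (by rw [hm, h0])
  · have h0 : mpow A 0 i i = 0 := by simp [mpow, mId]
    rw [← h0]; exact mpow_le_mstar A 0 i i

open Equiv in
lemma chain_le_mstar (A : Matrix (Fin n) (Fin n) EReal) (τ : Equiv.Perm (Fin n))
    (k : ℕ) (x : Fin n) :
    (∑ r ∈ Finset.range k, A ((τ ^ r) x) ((τ ^ (r + 1)) x)) ≤ mstar A x ((τ ^ k) x) := by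
  have h := wW_le_mpow A k (fun r => (τ ^ r) x)
  have h0 : (τ ^ 0) x = x := by simp
  rw [wW] at h
  simp only [h0] at h
  exact h.trans (mpow_le_mstar A k x ((τ ^ k) x))

open Equiv.Perm in
lemma key_facts {A : Matrix (Fin n) (Fin n) EReal} (hA : ∀ i j, A i j ≠ ⊤) (hb : CycleBound A)
    (τ : Equiv.Perm (Fin n)) (hτ : τ.IsCycle)
    (hw : (∑ i ∈ τ.support, A i (τ i)) = 0) :
    ∀ i ∈ τ.support, ∃ s t : ℝ, mstar A i (τ i) = (s : EReal) ∧ mstar A (τ i) i = (t : EReal) ∧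
      ((s : EReal) + (t : EReal) = 0) := by
  intro i hi
  classical
  set K := τ.support.card with hKdef
  have hK : orderOf τ = K := hτ.orderOf
  have hKone : τ ^ K = 1 := by rw [← hK]; exact pow_orderOf_eq_one τ
  have hKpos : 0 < K := Finset.card_pos.mpr ⟨i, hi⟩
  -- each critical entry is not ⊥
  have hnbot : ∀ j ∈ τ.support, A j (τ j) ≠ ⊥ := by
    intro j hj hbot
    have h1 := Finset.add_sum_erase τ.support (fun j => A j (τ j)) hj
    simp only [hbot, EReal.bot_add] at h1
    rw [hw] at h1
    exact absurd h1.symm (by simp)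
  -- orbit sum equals support sum
  have horb : (∑ r ∈ Finset.range K, A ((τ ^ r) i) ((τ ^ (r + 1)) i)) = 0 := by
    rw [← hw]
    refine Finset.sum_bij (fun r _ => (τ ^ r) i) ?_ ?_ ?_ ?_
    · intro r _
      exact pow_apply_mem_support.mpr hi
    · intro r₁ hr₁ r₂ hr₂ hr
      simp only [Finset.mem_range] at hr₁ hr₂
      have main : ∀ a b : ℕ, a < K → b < K → a < b → (τ ^ a) i = (τ ^ b) i → False := by
        intro a b _ hbK hab heq
        have hsplit : (τ ^ (b - a)) ((τ ^ a) i) = (τ ^ a) i := by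
          rw [← Equiv.Perm.mul_apply, ← pow_add, Nat.sub_add_cancel hab.le]
          exact heq.symm
        have hy : τ ((τ ^ a) i) ≠ (τ ^ a) i :=
          mem_support.mp (pow_apply_mem_support.mpr hi)
        have hone : τ ^ (b - a) = 1 := (hτ.pow_eq_one_iff' hy).mpr hsplit
        have hdvd := orderOf_dvd_of_pow_eq_one hone
        rw [hK] at hdvd
        have := Nat.le_of_dvd (by omega) hdvd
        omega
      by_contra hne
      rcases Nat.lt_or_ge r₁ r₂ with h | h
      · exact main r₁ r₂ hr₁ hr₂ h hr
      · exact main r₂ r₁ hr₂ hr₁ (by omega) hr.symm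
    · intro j hj
      obtain ⟨r, hrK, hr⟩ :=
        (hτ.sameCycle (mem_support.mp hi) (mem_support.mp hj)).exists_pow_eq'
      exact ⟨r, Finset.mem_range.mpr (hK ▸ hrK), hr⟩
    · intro r _
      show A ((τ ^ r) i) ((τ ^ (r + 1)) i) = A ((τ ^ r) i) (τ ((τ ^ r) i))
      rw [pow_succ', Equiv.Perm.mul_apply]
  obtain ⟨K', hK'⟩ : ∃ K', K = K' + 1 := ⟨K - 1, by omega⟩
  rw [hK', Finset.sum_range_succ'] at horb
  simp only [pow_zero, Equiv.Perm.one_apply, pow_one, Nat.zero_add] at horb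
  set T : EReal := ∑ r ∈ Finset.range K', A ((τ ^ (r + 1)) i) ((τ ^ (r + 1 + 1)) i) with hTdef
  -- chain bound : T ≤ mstar A (τ i) i
  have hchain := chain_le_mstar A τ K' (τ i)
  have hrw : ∀ r : ℕ, (τ ^ r) (τ i) = (τ ^ (r + 1)) i := by
    intro r
    rw [pow_succ]
    exact (Equiv.Perm.mul_apply _ _ _).symm
  have hend : (τ ^ K') (τ i) = i := by
    rw [hrw K', ← hK', hKone]
    rfl
  rw [hend] at hchain
  have hchain' : T ≤ mstar A (τ i) i := by
    refine le_trans (le_of_eq ?_) hchain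
    exact Finset.sum_congr rfl fun r _ => by rw [hrw r, hrw (r + 1)]
  -- A i (τ i) is a real number
  have hanb : A i (τ i) ≠ ⊥ := hnbot i hi
  have hTnb : T ≠ ⊥ := by
    intro hbot
    rw [hbot, EReal.bot_add] at horb
    exact absurd horb (by simp)
  have hs_ge : A i (τ i) ≤ mstar A i (τ i) := le_mstar A i (τ i)
  have hsum_le : mstar A i (τ i) + mstar A (τ i) i ≤ 0 :=
    le_trans (mstar_tri A i (τ i) i) (le_of_eq (mstar_diag hA hb i))
  have hsum_ge : (0 : EReal) ≤ mstar A i (τ i) + mstar A (τ i) i := by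
    calc (0 : EReal) = A i (τ i) + T := by rw [add_comm]; exact horb.symm
      _ ≤ mstar A i (τ i) + mstar A (τ i) i := add_le_add hs_ge hchain'
  have hsum : mstar A i (τ i) + mstar A (τ i) i = 0 := le_antisymm hsum_le hsum_ge
  have hs_nb : mstar A i (τ i) ≠ ⊥ := by
    intro hbot
    rw [hbot] at hs_ge
    exact hanb (le_bot_iff.mp hs_ge)
  have ht_nb : mstar A (τ i) i ≠ ⊥ := by
    intro hbot
    rw [hbot] at hchain'
    exact hTnb (le_bot_iff.mp hchain')
  have hs_nt : mstar A i (τ i) ≠ ⊤ := by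
    intro htop
    rw [htop, EReal.top_add_of_ne_bot ht_nb] at hsum
    exact absurd hsum (by simp)
  have ht_nt : mstar A (τ i) i ≠ ⊤ := by
    intro htop
    rw [htop, EReal.add_top_of_ne_bot hs_nb] at hsum
    exact absurd hsum (by simp)
  rcases ereal_trichotomy (mstar A i (τ i)) with h | ⟨s, hs⟩ | h
  · exact absurd h hs_nb
  · rcases ereal_trichotomy (mstar A (τ i) i) with h | ⟨t, ht⟩ | h
    · exact absurd h ht_nb
    · exact ⟨s, t, hs, ht, by rw [← hs, ← ht]; exact hsum⟩
    · exact absurd h ht_nt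
  · exact absurd h hs_nt

open Equiv.Perm in
lemma identity_one {A : Matrix (Fin n) (Fin n) EReal} (hA : ∀ i j, A i j ≠ ⊤) (hb : CycleBound A)
    (τ : Equiv.Perm (Fin n)) (hτ : τ.IsCycle)
    (hw : (∑ i ∈ τ.support, A i (τ i)) = 0) :
    ∀ i ∈ τ.support, ∀ l, mstar A i l = mstar A i (τ i) + mstar A (τ i) l := by
  intro i hi l
  obtain ⟨s, t, hs, ht, hst⟩ := key_facts hA hb τ hτ hw i hi
  have hsum : mstar A i (τ i) + mstar A (τ i) i = 0 := by rw [hs, ht]; exact hst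
  apply le_antisymm
  · calc mstar A i l = (mstar A i (τ i) + mstar A (τ i) i) + mstar A i l := by
          rw [hsum, zero_add]
      _ = mstar A i (τ i) + (mstar A (τ i) i + mstar A i l) := add_assoc _ _ _
      _ ≤ mstar A i (τ i) + mstar A (τ i) l := add_le_add_right (mstar_tri A (τ i) i l) _
  · exact mstar_tri A i (τ i) l

open Equiv.Perm in
lemma identity_two {A : Matrix (Fin n) (Fin n) EReal} (hA : ∀ i j, A i j ≠ ⊤) (hb : CycleBound A)
    (τ : Equiv.Perm (Fin n)) (hτ : τ.IsCycle)
    (hw : (∑ i ∈ τ.support, A i (τ i)) = 0) :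
    ∀ i ∈ τ.support, ∀ l, mstar A l i = mstar A l (τ⁻¹ i) + mstar A (τ⁻¹ i) i := by
  intro i hi l
  have hj : τ⁻¹ i ∈ τ.support :=
    apply_mem_support.mp (by rwa [show τ (τ⁻¹ i) = i from τ.apply_symm_apply i])
  set j := τ⁻¹ i with hjdef
  have hji : τ j = i := τ.apply_symm_apply i
  obtain ⟨s, t, hs, ht, hst⟩ := key_facts hA hb τ hτ hw j hj
  have hsum : mstar A (τ j) j + mstar A j (τ j) = 0 := by rw [hs, ht, add_comm]; exact hst
  rw [← hji]
  apply le_antisymm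
  · calc mstar A l (τ j)
        = mstar A l (τ j) + (mstar A (τ j) j + mstar A j (τ j)) := by rw [hsum, add_zero]
      _ = (mstar A l (τ j) + mstar A (τ j) j) + mstar A j (τ j) := (add_assoc _ _ _).symm
      _ ≤ mstar A l j + mstar A j (τ j) := add_le_add_left (mstar_tri A l (τ j) j) _
  · exact mstar_tri A l j (τ j)

open Equiv.Perm in
theorem mstar_along_critical_cycle' {A : Matrix (Fin n) (Fin n) EReal}
    (hA : ∀ i j, A i j ≠ ⊤) (hb : CycleBound A)
    (τ : Equiv.Perm (Fin n)) (hτ : τ.IsCycle)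
    (hw : (∑ i ∈ τ.support, A i (τ i)) = 0) :
    ∀ i ∈ τ.support, ∀ j ∈ τ.support, ∃ c : ℝ,
      ∀ k, mstar A k i = (c : EReal) + mstar A k j := by
  set P : Fin n → Fin n → Prop :=
    fun i j => ∃ c : ℝ, ∀ k, mstar A k i = (c : EReal) + mstar A k j with hP
  have hrefl : ∀ i, P i i := fun i => ⟨0, fun k => by simp⟩
  have htrans : ∀ {i j k}, P i j → P j k → P i k := by
    rintro i j k ⟨c₁, h₁⟩ ⟨c₂, h₂⟩
    refine ⟨c₁ + c₂, fun x => ?_⟩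
    rw [h₁ x, h₂ x, ← add_assoc, ← EReal.coe_add]
  have hstep : ∀ j ∈ τ.support, P (τ j) j := by
    intro j hj
    obtain ⟨s, t, hs, _, _⟩ := key_facts hA hb τ hτ hw j hj
    have hjsupp : τ j ∈ τ.support := apply_mem_support.mpr hj
    refine ⟨s, fun k => ?_⟩
    have h2 := identity_two hA hb τ hτ hw (τ j) hjsupp k
    rw [show τ⁻¹ (τ j) = j from τ.symm_apply_apply j] at h2
    rw [h2, hs, add_comm]
  have hpow : ∀ (r : ℕ), ∀ i ∈ τ.support, P ((τ ^ r) i) i := by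
    intro r
    induction r with
    | zero => intro i _; simpa using hrefl i
    | succ r ih =>
      intro i hi
      have hy : (τ ^ r) i ∈ τ.support := pow_apply_mem_support.mpr hi
      have h1 : P (τ ((τ ^ r) i)) ((τ ^ r) i) := hstep _ hy
      have h2 : (τ ^ (r + 1)) i = τ ((τ ^ r) i) := by
        rw [pow_succ', Equiv.Perm.mul_apply]
      rw [h2]
      exact htrans h1 (ih i hi)
  intro i hi j hj
  obtain ⟨r, _, hr⟩ :=
    (hτ.sameCycle (mem_support.mp hj) (mem_support.mp hi)).exists_pow_eq'
  have := hpow r j hj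
  rw [hr] at this
  exact this

/-- Along a critical cycle (a cyclic permutation `τ` whose cycle weight is `0`, hence
cycle mean `0 = λ(A)`), the Kleene star satisfies
`A*_{il} = A*_{iτ(i)} + A*_{τ(i)l}` and `A*_{li} = A*_{lτ⁻¹(i)} + A*_{τ⁻¹(i)i}`;
in particular columns of `A*` indexed by vertices of the cycle are max-plus
proportional. -/
theorem mstar_along_critical_cycle {n : ℕ} (A : Matrix (Fin n) (Fin n) EReal)
    (hA : ∀ i j, A i j ≠ ⊤) (hb : CycleBound A)
    (τ : Equiv.Perm (Fin n)) (hτ : τ.IsCycle)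
    (hw : (∑ i ∈ τ.support, A i (τ i)) = 0) :
    (∀ l : Fin n, ∀ i ∈ τ.support,
        mstar A i l = mstar A i (τ i) + mstar A (τ i) l ∧
        mstar A l i = mstar A l (τ⁻¹ i) + mstar A (τ⁻¹ i) i) ∧
      ∀ i ∈ τ.support, ∀ j ∈ τ.support, ∃ c : ℝ,
        ∀ k, mstar A k i = (c : EReal) + mstar A k j := by
  constructor
  · intro l i hi
    exact ⟨identity_one hA hb τ hτ hw i hi l, identity_two hA hb τ hτ hw i hi l⟩
  · exact mstar_along_critical_cycle' hA hb τ hτ hw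

end MaxPlus
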